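/- Let 0 < m ≤ L and let f : ℝⁿ → ℝ be differentiable, m-strongly convex, with L-Lipschitz continuous gradient, with minimizer x* (so ∇f(x*) = 0). Let ξ : ℕ → ℝⁿ be the gradient descent iterates with step size α = 1/L, i.e., ξ_{k+1} = ξ_k − (1/L)∇f(ξ_k). Then for all k ≥ 0, ‖ξ_k − x*‖ ≤ (1 − 1/κ)^k · ‖ξ₀ − x*‖, where κ = L/m is the condition number of f. -/

import Mathlib

open scoped RealInnerProductSpace

section Aux

variable {E : Type*} [NormedAddCommGroup E] [InnerProductSpace ℝ E] [CompleteSpace E]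

/-- Descent lemma: a function with `L`-Lipschitz gradient satisfies the quadratic
upper bound `f y ≤ f x + ⟪∇f x, y - x⟫ + (L/2)‖y - x‖²`. -/
lemma descent_lemma {f : E → ℝ} {f' : E → E} {L : ℝ}
    (hdiff : ∀ x, HasGradientAt f (f' x) x)
    (hlip : ∀ x y, ‖f' y - f' x‖ ≤ L * ‖y - x‖) (x y : E) :
    f y ≤ f x + ⟪f' x, y - x⟫ + (L / 2) * ‖y - x‖ ^ 2 := by
  set v := y - x with hv
  set γ : ℝ → E := fun t => x + t • v with hγ
  have hγd : ∀ t : ℝ, HasDerivAt γ v t := by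
    intro t
    exact (((hasDerivAt_id t).smul_const v).const_add x).congr_deriv (one_smul ℝ v)
  have hφ : ∀ t : ℝ, HasDerivAt (fun s => f (γ s)) ⟪f' (γ t), v⟫ t := by
    intro t
    exact (hdiff (γ t)).hasFDerivAt.comp_hasDerivAt t (hγd t)
  set ψ : ℝ → ℝ := fun t => f (γ t) - t * ⟪f' x, v⟫ - L / 2 * t ^ 2 * ‖v‖ ^ 2 with hψ
  have hψd : ∀ t : ℝ, HasDerivAt ψ (⟪f' (γ t), v⟫ - ⟪f' x, v⟫ - L * t * ‖v‖ ^ 2) t := by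
    intro t
    have h1 : HasDerivAt (fun t : ℝ => t * ⟪f' x, v⟫) ⟪f' x, v⟫ t := by
      simpa using (hasDerivAt_id t).mul_const (⟪f' x, v⟫)
    have h2 : HasDerivAt (fun t : ℝ => L / 2 * t ^ 2 * ‖v‖ ^ 2) (L * t * ‖v‖ ^ 2) t := by
      have := ((hasDerivAt_pow 2 t).const_mul (L / 2)).mul_const (‖v‖ ^ 2)
      exact this.congr_deriv (by rw [show (2:ℕ) - 1 = 1 from rfl, pow_one]; push_cast; ring)
    exact ((hφ t).sub h1).sub h2
  have anti : AntitoneOn ψ (Set.Icc (0:ℝ) 1) := by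
    apply antitoneOn_of_deriv_nonpos (convex_Icc 0 1)
    · exact fun t _ => ((hψd t).differentiableAt.continuousAt).continuousWithinAt
    · exact fun t _ => (hψd t).differentiableAt.differentiableWithinAt
    · intro t ht
      rw [interior_Icc] at ht
      rw [(hψd t).deriv]
      have h1 : ⟪f' (γ t), v⟫ - ⟪f' x, v⟫ = ⟪f' (γ t) - f' x, v⟫ := (inner_sub_left _ _ _).symm
      have h2 : ⟪f' (γ t) - f' x, v⟫ ≤ ‖f' (γ t) - f' x‖ * ‖v‖ := real_inner_le_norm _ _
      have h3 : ‖f' (γ t) - f' x‖ ≤ L * ‖γ t - x‖ := hlip x (γ t)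
      have h4 : ‖γ t - x‖ = t * ‖v‖ := by
        have : γ t - x = t • v := by simp [hγ]
        rw [this, norm_smul, Real.norm_eq_abs, abs_of_pos ht.1]
      rw [h4] at h3
      nlinarith [norm_nonneg v, ht.1.le]
  have key := anti (Set.left_mem_Icc.2 zero_le_one) (Set.right_mem_Icc.2 zero_le_one) zero_le_one
  have e0 : γ 0 = x := by simp [hγ]
  have e1 : γ 1 = y := by simp [hγ, hv]
  rw [hψ] at key
  simp only [e0, e1] at key
  norm_num at key
  linarith

/-- Co-coercivity from convexity (first-order lower bound) plus the descent lemma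
(quadratic upper bound). Purely algebraic. -/
lemma cocoer {f : E → ℝ} {g : E → E} {C : ℝ} (hC : 0 < C)
    (hconv : ∀ x y, f x + ⟪g x, y - x⟫ ≤ f y)
    (hdesc : ∀ x y, f y ≤ f x + ⟪g x, y - x⟫ + (C / 2) * ‖y - x‖ ^ 2)
    (x y : E) : ‖g x - g y‖ ^ 2 ≤ C * ⟪g x - g y, x - y⟫ := by
  set u := g x - g y with hu
  have h1 := hconv x (y + (1/C) • u)
  have h2 := hdesc y (y + (1/C) • u)
  have h3 := hconv y (x - (1/C) • u)
  have h4 := hdesc x (x - (1/C) • u)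
  have e1 : y + (1/C) • u - x = (y - x) + (1/C) • u := by abel
  have e2 : y + (1/C) • u - y = (1/C) • u := by abel
  have e3 : x - (1/C) • u - y = (x - y) - (1/C) • u := by abel
  have e4 : x - (1/C) • u - x = -((1/C) • u) := by abel
  have hnu : ‖(1/C) • u‖ ^ 2 = (1/C)^2 * ‖u‖^2 := by
    rw [norm_smul, Real.norm_eq_abs, abs_of_pos (by positivity), mul_pow]
  rw [e1, inner_add_right, real_inner_smul_right] at h1
  rw [e2, real_inner_smul_right, hnu] at h2
  rw [e3, inner_sub_right, real_inner_smul_right] at h3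
  rw [e4, inner_neg_right, real_inner_smul_right, norm_neg, hnu] at h4
  have key : (1/C) * ⟪g x, u⟫ - (1/C) * ⟪g y, u⟫ = (1/C) * ‖u‖ ^ 2 := by
    have : ⟪g x, u⟫ - ⟪g y, u⟫ = ‖u‖ ^ 2 := by
      rw [← inner_sub_left, hu, real_inner_self_eq_norm_sq]
    linear_combination (1/C) * this
  have hterm : (C/2) * ((1/C)^2 * ‖u‖^2) = (1/2) * ((1/C) * ‖u‖^2) := by
    field_simp
  have hsum : ⟪g x, y - x⟫ + ⟪g y, x - y⟫ ≤ -((1/C) * ‖u‖^2) := by linarith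
  have egoal : ⟪u, x - y⟫ = -(⟪g x, y - x⟫ + ⟪g y, x - y⟫) := by
    rw [hu]
    simp only [inner_sub_left, inner_sub_right]
    ring
  rw [egoal]
  calc ‖u‖ ^ 2 = C * ((1/C) * ‖u‖^2) := by field_simp
    _ ≤ C * (-(⟪g x, y - x⟫ + ⟪g y, x - y⟫)) :=
        mul_le_mul_of_nonneg_left (by linarith) hC.le

end Aux

/-- The rate bound ρ = 1 − m/L = 1 − 1/κ (eq. (13) of the paper) for gradient descent
with the standard step size α = 1/L, where κ = L/m is the condition number. -/
theorem stmt_10 {n : ℕ} (m L : ℝ) (hm : 0 < m) (hmL : m ≤ L)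
    (f : EuclideanSpace ℝ (Fin n) → ℝ)
    (f' : EuclideanSpace ℝ (Fin n) → EuclideanSpace ℝ (Fin n))
    (hdiff : ∀ x, HasGradientAt f (f' x) x)
    (hsc : ∀ x y, f y ≥ f x + ⟪f' x, y - x⟫ + (m / 2) * ‖y - x‖ ^ 2)
    (hlip : ∀ x y, ‖f' y - f' x‖ ≤ L * ‖y - x‖)
    (xstar : EuclideanSpace ℝ (Fin n)) (hstar : f' xstar = 0)
    (ξ : ℕ → EuclideanSpace ℝ (Fin n))
    (hξ : ∀ k, ξ (k + 1) = ξ k - (1 / L) • f' (ξ k)) :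
    ∀ k : ℕ, ‖ξ k - xstar‖ ≤ (1 - 1 / (L / m)) ^ k * ‖ξ 0 - xstar‖ := by
  have hL : 0 < L := lt_of_lt_of_le hm hmL
  have hrate : 0 ≤ 1 - m / L := by
    have : m / L ≤ 1 := (div_le_one hL).mpr hmL
    linarith
  -- convexity lower bound for f
  have hconvf : ∀ x y, f x + ⟪f' x, y - x⟫ ≤ f y := by
    intro x y
    have h := hsc x y
    have h2 : 0 ≤ (m / 2) * ‖y - x‖ ^ 2 := by positivity
    linarith
  -- descent lemma for f
  have hdescf : ∀ x y, f y ≤ f x + ⟪f' x, y - x⟫ + (L / 2) * ‖y - x‖ ^ 2 :=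
    descent_lemma hdiff hlip
  -- the key norm expansion identity
  have hid : ∀ a b : EuclideanSpace ℝ (Fin n),
      ‖b‖ ^ 2 = ‖a‖ ^ 2 + 2 * ⟪a, b - a⟫ + ‖b - a‖ ^ 2 := by
    intro a b
    have h := norm_add_sq_real a (b - a)
    rwa [add_sub_cancel] at h
  -- strong convexity monotonicity: ⟪f' x, x - x*⟫ ≥ m ‖x - x*‖²
  have fA : ∀ x, m * ‖x - xstar‖ ^ 2 ≤ ⟪f' x, x - xstar⟫ := by
    intro x
    have h1 := hsc x xstar
    have h2 := hsc xstar x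
    rw [hstar] at h2
    simp only [inner_zero_left] at h2
    have e : xstar - x = -(x - xstar) := by abel
    rw [e, inner_neg_right, norm_neg] at h1
    linarith
  -- co-coercivity of f: ‖f' x‖² ≤ L ⟪f' x, x - x*⟫
  have fB : ∀ x, ‖f' x‖ ^ 2 ≤ L * ⟪f' x, x - xstar⟫ := by
    intro x
    have h := cocoer hL hconvf hdescf x xstar
    rwa [hstar, sub_zero] at h
  -- single-step contraction
  have hstep : ∀ x : EuclideanSpace ℝ (Fin n),
      ‖(x - xstar) - (1 / L) • f' x‖ ≤ (1 - m / L) * ‖x - xstar‖ := by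
    intro x
    set d := x - xstar with hd
    set g := f' x with hg
    have expand : L ^ 2 * ‖d - (1 / L) • g‖ ^ 2
        = L ^ 2 * ‖d‖ ^ 2 - 2 * L * ⟪g, d⟫ + ‖g‖ ^ 2 := by
      rw [norm_sub_sq_real, real_inner_smul_right, norm_smul, Real.norm_eq_abs,
        abs_of_pos (by positivity : (0:ℝ) < 1 / L), mul_pow, real_inner_comm d g]
      field_simp
    have hL2 : (0:ℝ) < L ^ 2 := by positivity
    have key2 : ‖d - (1 / L) • g‖ ^ 2 ≤ ((1 - m / L) * ‖d‖) ^ 2 := by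
      rcases eq_or_lt_of_le hmL with rfl | hlm
      · -- case m = L
        have h9 : m ^ 2 * ‖d - (1 / m) • g‖ ^ 2 ≤ m ^ 2 * ((1 - m / m) * ‖d‖) ^ 2 := by
          rw [expand, div_self hm.ne']
          have hA := mul_le_mul_of_nonneg_left (fA x) hm.le
          have hB := fB x
          simp only [← hd, ← hg] at hA hB
          nlinarith
        exact le_of_mul_le_mul_left h9 hL2
      · -- case m < L : use co-coercivity of f - (m/2)‖·‖²
        have hC : (0:ℝ) < L - m := by linarith
        have hconvφ : ∀ a b : EuclideanSpace ℝ (Fin n),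
            (f a - (m/2) * ‖a‖^2) + ⟪f' a - m • a, b - a⟫ ≤ f b - (m/2) * ‖b‖^2 := by
          intro a b
          have h := hsc a b
          have hi : (m/2) * ‖b‖^2 = (m/2) * ‖a‖^2 + m * ⟪a, b - a⟫ + (m/2) * ‖b - a‖^2 := by
            linear_combination (m/2) * hid a b
          rw [inner_sub_left, real_inner_smul_left]
          linarith
        have hdescφ : ∀ a b : EuclideanSpace ℝ (Fin n),
            f b - (m/2) * ‖b‖^2 ≤ (f a - (m/2) * ‖a‖^2) + ⟪f' a - m • a, b - a⟫
              + ((L - m) / 2) * ‖b - a‖ ^ 2 := by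
          intro a b
          have h := hdescf a b
          have hi : (m/2) * ‖b‖^2 = (m/2) * ‖a‖^2 + m * ⟪a, b - a⟫ + (m/2) * ‖b - a‖^2 := by
            linear_combination (m/2) * hid a b
          rw [inner_sub_left, real_inner_smul_left]
          linarith
        have fC := cocoer hC hconvφ hdescφ x xstar
        have e : (f' x - m • x) - (f' xstar - m • xstar) = g - m • d := by
          rw [hstar, hg, hd, smul_sub]
          abel
        rw [e] at fC
        have e2 : ‖g - m • d‖ ^ 2 = ‖g‖^2 - 2 * m * ⟪g, d⟫ + m^2 * ‖d‖^2 := by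
          rw [norm_sub_sq_real, real_inner_smul_right, norm_smul, Real.norm_eq_abs,
            abs_of_pos hm, mul_pow]
          ring
        have e3 : ⟪g - m • d, x - xstar⟫ = ⟪g, d⟫ - m * ‖d‖^2 := by
          rw [← hd, inner_sub_left, real_inner_smul_left, real_inner_self_eq_norm_sq]
        rw [e2, e3] at fC
        have hA := fA x
        simp only [← hd, ← hg] at hA
        have hprod : 0 ≤ (L - m) * (⟪g, d⟫ - m * ‖d‖^2) :=
          mul_nonneg hC.le (by linarith)
        have hRHS : L ^ 2 * ((1 - m / L) * ‖d‖) ^ 2 = (L - m)^2 * ‖d‖^2 := by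
          field_simp
        have h9 : L ^ 2 * ‖d - (1 / L) • g‖ ^ 2 ≤ L ^ 2 * ((1 - m / L) * ‖d‖) ^ 2 := by
          rw [expand, hRHS]
          nlinarith
        exact le_of_mul_le_mul_left h9 hL2
    have hb : 0 ≤ (1 - m / L) * ‖d‖ := mul_nonneg hrate (norm_nonneg _)
    exact (pow_le_pow_iff_left₀ (norm_nonneg _) hb two_ne_zero).mp key2
  -- conclude by induction
  simp only [one_div_div]
  intro k
  induction k with
  | zero => simp
  | succ k ih =>
    have e : ξ (k + 1) - xstar = (ξ k - xstar) - (1 / L) • f' (ξ k) := by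
      rw [hξ k, sub_right_comm]
    calc ‖ξ (k + 1) - xstar‖ = ‖(ξ k - xstar) - (1 / L) • f' (ξ k)‖ := by rw [e]
      _ ≤ (1 - m / L) * ‖ξ k - xstar‖ := hstep (ξ k)
      _ ≤ (1 - m / L) * ((1 - m / L) ^ k * ‖ξ 0 - xstar‖) :=
          mul_le_mul_of_nonneg_left ih hrate
      _ = (1 - m / L) ^ (k + 1) * ‖ξ 0 - xstar‖ := by rw [pow_succ]; ring
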